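/- The bound (16/3)γ − 1 in the four-sequence lemma is sharp: for every δ > 0 there exist a real number γ > 5/8 and four non-increasing pairs (a_0, a_1), (b_0, b_1), (c_0, c_1), (d_0, d_1) of real numbers in [0,1] with a_0·b_0·c_0·d_0 > 0 and a_0 + a_1 + b_0 + b_1 + c_0 + c_1 + d_0 + d_1 > 8γ, such that every (i, j, k, l) ∈ {0,1}^4 with i + j + k + l ≥ 2 and a_i·b_j·c_k·d_l > 0 satisfies a_i + b_j + c_k + d_l ≤ (16/3)γ − 1 + δ. (An example is a = b = c = (1, 2/3) and d = (ε, 0) for small ε > 0.) -/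

import Mathlib

/-- **Sharpness of the bound `(16/3)γ − 1` in the four-pair lemma.** For every `δ > 0`
there are `γ > 5/8` and four non-increasing pairs in `[0,1]` satisfying the hypotheses
of the four-pair lemma, for which every admissible choice `(i,j,k,l)` with
`i+j+k+l ≥ 2` and positive product has `a_i + b_j + c_k + d_l ≤ (16/3)γ − 1 + δ`. -/
theorem four_pair_lemma_sharp :
    ∀ δ : ℝ, 0 < δ →
      ∃ γ : ℝ, 5 / 8 < γ ∧
        ∃ a b c d : Fin 2 → ℝ,
          (a 1 ≤ a 0) ∧ (b 1 ≤ b 0) ∧ (c 1 ≤ c 0) ∧ (d 1 ≤ d 0) ∧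
          (∀ i : Fin 2, a i ∈ Set.Icc (0 : ℝ) 1 ∧ b i ∈ Set.Icc (0 : ℝ) 1 ∧
            c i ∈ Set.Icc (0 : ℝ) 1 ∧ d i ∈ Set.Icc (0 : ℝ) 1) ∧
          (0 < a 0 * b 0 * c 0 * d 0) ∧
          (a 0 + a 1 + b 0 + b 1 + c 0 + c 1 + d 0 + d 1 > 8 * γ) ∧
          (∀ i j k l : Fin 2, 2 ≤ (i : ℕ) + (j : ℕ) + (k : ℕ) + (l : ℕ) →
            0 < a i * b j * c k * d l →
            a i + b j + c k + d l ≤ 16 / 3 * γ - 1 + δ) := by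
  intro δ hδ
  set ε : ℝ := min δ 1 with hε
  have hε0 : 0 < ε := lt_min hδ one_pos
  have hεδ : ε ≤ δ := min_le_left _ _
  have hε1 : ε ≤ 1 := min_le_right _ _
  refine ⟨5/8 + ε/16, by linarith, ![1, 2/3], ![1, 2/3], ![1, 2/3], ![ε, 0],
    ?_, ?_, ?_, ?_, ?_, ?_, ?_, ?_⟩
  · norm_num
  · norm_num
  · norm_num
  · simp [hε0.le]
  · intro i; fin_cases i <;> simp <;> constructor <;> norm_num <;> linarith
  · simp; positivity
  · simp; linarith
  · intro i j k l hsum hpos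
    fin_cases i <;> fin_cases j <;> fin_cases k <;> fin_cases l <;>
      simp_all <;> linarith [min_le_left δ 1, min_le_right δ 1]
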